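/- Let G be a finite group and W a finite-dimensional complex representation of G. The symmetric bilinear form K_W on the group algebra ℂG defined by K_W(a,b) = χ_W(ab) for a,b ∈ G (extended bilinearly) is nondegenerate if and only if every irreducible complex representation of G occurs in W with positive multiplicity. -/

import Mathlib

open CategoryTheory

open LinearMap
open scoped TensorProduct Matrix ComplexOrder

noncomputable section
set_option maxHeartbeats 1000000
set_option linter.unusedSectionVars false
set_option linter.unusedTactic false

namespace Stmt6Aux

/-! ### A trace identity -/

variable {V W : Type} [AddCommGroup V] [Module ℂ V] [AddCommGroup W] [Module ℂ W]
  [FiniteDimensional ℂ V] [FiniteDimensional ℂ W]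

/-- `φ ↦ B ∘ φ ∘ C` as a linear endomorphism of `V →ₗ[ℂ] W`. -/
def sandwich (B : W →ₗ[ℂ] W) (C : V →ₗ[ℂ] V) : (V →ₗ[ℂ] W) →ₗ[ℂ] (V →ₗ[ℂ] W) where
  toFun φ := B ∘ₗ φ ∘ₗ C
  map_add' φ ψ := by ext v; simp
  map_smul' c φ := by ext v; simp

lemma trace_sandwich (B : W →ₗ[ℂ] W) (C : V →ₗ[ℂ] V) :
    trace ℂ _ (sandwich B C) = trace ℂ W B * trace ℂ V C := by
  have he : ∀ t : Module.Dual ℂ V ⊗[ℂ] W,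
      sandwich B C (dualTensorHomEquiv ℂ V W t)
        = dualTensorHomEquiv ℂ V W (TensorProduct.map (Module.Dual.transpose (R := ℂ) C) B t) := by
    intro t
    induction t with
    | zero => simp
    | tmul f w => ext v; simp [sandwich, dualTensorHomEquiv, Module.Dual.transpose_apply]
    | add x y hx hy => simp only [map_add, hx, hy]
  have h2 : sandwich B C = (dualTensorHomEquiv ℂ V W).conj
      (TensorProduct.map (Module.Dual.transpose (R := ℂ) C) B) := by
    refine LinearMap.ext fun φ => ?_
    rw [LinearEquiv.conj_apply]
    have := he ((dualTensorHomEquiv ℂ V W).symm φ)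
    rw [LinearEquiv.apply_symm_apply] at this
    simpa using this
  rw [h2, trace_conj', trace_tensorProduct', trace_transpose', mul_comm]

variable {G : Type} [Group G] [Fintype G] [DecidableEq G]

/-! ### If some simple does not occur, the matrix is singular -/

lemma sum_char_eq_zero_of_no_hom {V W : FDRep ℂ G} (hno : ∀ f : V ⟶ W, f = 0) (a : G) :
    ∑ g : G, V.character g⁻¹ * W.character (a * g) = 0 := by
  haveI : Invertible ((Fintype.card G : ℂ)) :=
    invertibleOfNonzero (by exact_mod_cast Fintype.card_ne_zero)
  set ρH := Representation.linHom V.ρ W.ρ with hρH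
  have hinv : ρH.invariants = ⊥ := by
    rw [eq_bot_iff]
    intro T hT
    rw [Representation.mem_invariants] at hT
    have hcomm : ∀ g : G, T ∘ₗ V.ρ g = W.ρ g ∘ₗ T := by
      intro g
      have key : W.ρ g ∘ₗ T ∘ₗ V.ρ g⁻¹ = T := hT g
      have hv : ∀ v, V.ρ g⁻¹ (V.ρ g v) = v := fun v => by
        rw [← Module.End.mul_apply, ← map_mul, inv_mul_cancel, map_one, Module.End.one_apply]
      calc T ∘ₗ V.ρ g = (W.ρ g ∘ₗ T ∘ₗ V.ρ g⁻¹) ∘ₗ V.ρ g := by rw [key]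
        _ = W.ρ g ∘ₗ T := LinearMap.ext fun v => by simp [hv]
    let φ' : V ⟶ W := ⟨FGModuleCat.ofHom T, fun g => FGModuleCat.hom_ext (hcomm g)⟩
    have hφ : φ' = 0 := hno _
    have hT0 : T = 0 := congrArg (fun f => f.hom.hom.hom) hφ
    simp [hT0]
  have havg : (∑ g : G, ρH g) = 0 := by
    have hproj := Representation.isProj_averageMap ρH
    have h0 : ρH.averageMap = 0 := by
      refine LinearMap.ext fun φ => ?_
      have := hproj.1 φ
      rw [hinv] at this
      simpa using this
    have : Representation.asAlgebraHom ρH (GroupAlgebra.average ℂ G) = 0 := h0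
    rw [GroupAlgebra.average, map_smul, map_sum] at this
    have h2 : (⅟ (Fintype.card G : ℂ)) • ∑ g : G, ρH g = 0 := by
      simpa [Representation.asAlgebraHom_of] using this
    have := congrArg (fun z => (Fintype.card G : ℂ) • z) h2
    simpa [smul_smul, mul_invOf_self] using this
  have hsum : (∑ g : G, sandwich (W.ρ (a * g)) (V.ρ g⁻¹)) = 0 := by
    have : ∀ g : G, sandwich (W.ρ (a * g)) (V.ρ g⁻¹) = sandwich (W.ρ a) LinearMap.id * ρH g := by
      intro g
      ext φ v
      simp [sandwich, hρH, Representation.linHom, map_mul]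
    rw [Finset.sum_congr rfl fun g _ => this g, ← Finset.mul_sum, havg, mul_zero]
  have := congrArg (trace ℂ _) hsum
  rw [map_sum, map_zero] at this
  rw [← this]
  refine Finset.sum_congr rfl fun g _ => ?_
  rw [trace_sandwich, mul_comm]
  rfl

lemma nontrivial_of_simple (V : FDRep ℂ G) [Simple V] : Nontrivial V := by
  by_contra h
  rw [not_nontrivial_iff_subsingleton] at h
  have : (𝟙 V : V ⟶ V) = 0 := by
    apply Action.hom_ext
    apply FGModuleCat.hom_ext
    exact LinearMap.ext fun v => (h.elim _ _ : (v : V) = 0)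
  exact CategoryTheory.id_nonzero V this

lemma det_eq_zero_of_no_hom {W : FDRep ℂ G} (V : FDRep ℂ G) [Simple V]
    (hno : ∀ f : V ⟶ W, f = 0) :
    Matrix.det (Matrix.of fun a b : G => W.character (a * b)) = 0 := by
  rw [← Matrix.exists_mulVec_eq_zero_iff]
  refine ⟨fun b => V.character b⁻¹, ?_, ?_⟩
  · intro h
    have h1 := congrFun h 1
    haveI := nontrivial_of_simple V
    simp only [inv_one, FDRep.char_one, Pi.zero_apply] at h1
    have : (0 : ℕ) < Module.finrank ℂ V := Module.finrank_pos
    rw [Nat.cast_eq_zero (R := ℂ)] at h1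
    omega
  · funext a
    simp only [Matrix.mulVec, dotProduct, Matrix.of_apply, Pi.zero_apply]
    rw [← sum_char_eq_zero_of_no_hom hno a]
    exact Finset.sum_congr rfl fun g _ => by ring

/-! ### The matrix argument: a kernel vector kills the representation -/

lemma trace_star_mul_self_eq_zero {n : Type} [Fintype n] [DecidableEq n] {E : Matrix n n ℂ}
    (h : (star E * E).trace = 0) : E = 0 := by
  have hterm : ∀ j, (star E * E) j j = star (fun i => E i j) ⬝ᵥ (fun i => E i j) := by
    intro j
    simp [Matrix.mul_apply, dotProduct, Matrix.star_apply, Matrix.star_eq_conjTranspose,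
      Matrix.conjTranspose_apply]
  have hsum : ∑ j, star (fun i => E i j) ⬝ᵥ (fun i => E i j) = 0 := by
    rw [← h]; exact (Finset.sum_congr rfl fun j _ => (hterm j).symm)
  have hz : ∀ j ∈ Finset.univ, star (fun i => E i j) ⬝ᵥ (fun i => E i j) = 0 :=
    (Finset.sum_eq_zero_iff_of_nonneg fun j _ => dotProduct_star_self_nonneg _).mp hsum
  ext i j
  have := dotProduct_star_self_eq_zero.mp (hz j (Finset.mem_univ j))
  exact congrFun this i

lemma rho_sum_zero (W : FDRep ℂ G) (v : G → ℂ)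
    (hv : ∀ a : G, ∑ b : G, v b * W.character (a * b) = 0) :
    (∑ b : G, v b • W.ρ b) = 0 := by
  set bas := Module.finBasis ℂ W with hbas
  set B : G → Matrix _ _ ℂ := fun g => LinearMap.toMatrix bas bas (W.ρ g) with hB
  have hBmul : ∀ g h : G, B (g * h) = B g * B h := by
    intro g h
    rw [hB]
    simp only [map_mul]
    exact LinearMap.toMatrix_mul bas _ _
  have hB1 : B 1 = 1 := by rw [hB]; simp only [map_one]; exact LinearMap.toMatrix_one bas
  have htr : ∀ g : G, (B g).trace = W.character g := fun g =>
    (LinearMap.trace_eq_matrix_trace ℂ bas (W.ρ g)).symm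
  set P := ∑ g : G, star (B g) * B g with hP
  have hsumMV : ∀ (M : G → Matrix (Fin (Module.finrank ℂ W)) (Fin (Module.finrank ℂ W)) ℂ)
      (u : Fin (Module.finrank ℂ W) → ℂ), (∑ g : G, M g) *ᵥ u = ∑ g : G, (M g) *ᵥ u := by
    intro M u
    ext i
    simp only [Matrix.mulVec, dotProduct, Finset.sum_apply, Matrix.sum_apply,
      Finset.sum_mul]
    exact Finset.sum_comm
  have hdots : ∀ (u : Fin (Module.finrank ℂ W) → ℂ)
      (w : G → Fin (Module.finrank ℂ W) → ℂ),
      star u ⬝ᵥ (∑ g : G, w g) = ∑ g : G, star u ⬝ᵥ w g := by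
    intro u w
    simp only [dotProduct, Finset.sum_apply, Finset.mul_sum]
    exact Finset.sum_comm
  have key : ∀ u, star u ⬝ᵥ (P *ᵥ u) = ∑ g : G, star (B g *ᵥ u) ⬝ᵥ (B g *ᵥ u) := by
    intro u
    rw [hP, hsumMV, hdots]
    refine Finset.sum_congr rfl fun g _ => ?_
    rw [← Matrix.mulVec_mulVec, Matrix.dotProduct_mulVec, Matrix.star_mulVec,
      Matrix.star_eq_conjTranspose, ← Matrix.dotProduct_mulVec]
  have hPdet : P.det ≠ 0 := by
    intro h0
    obtain ⟨u, hu0, huP⟩ := Matrix.exists_mulVec_eq_zero_iff.mpr h0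
    have h1 : ∑ g : G, star (B g *ᵥ u) ⬝ᵥ (B g *ᵥ u) = 0 := by
      rw [← key, huP, dotProduct_zero]
    have h2 := (Finset.sum_eq_zero_iff_of_nonneg
      fun g _ => dotProduct_star_self_nonneg _).mp h1 1 (Finset.mem_univ 1)
    rw [hB1, Matrix.one_mulVec] at h2
    exact hu0 (dotProduct_star_self_eq_zero.mp h2)
  have hPsd : P.PosSemidef := by
    refine Matrix.PosSemidef.of_dotProduct_mulVec_nonneg ?_ ?_
    · rw [Matrix.IsHermitian, hP]
      rw [Matrix.conjTranspose_sum]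
      refine Finset.sum_congr rfl fun g _ => ?_
      rw [← Matrix.star_eq_conjTranspose, star_mul, star_star]
    · intro u
      rw [key]
      exact Finset.sum_nonneg fun g _ => dotProduct_star_self_nonneg _
  obtain ⟨R, hR⟩ : ∃ R : Matrix _ _ ℂ, P = Rᴴ * R := by
    open scoped MatrixOrder in exact CStarAlgebra.nonneg_iff_eq_star_mul_self.mp hPsd.nonneg
  have hRdet : IsUnit R.det := by
    rw [isUnit_iff_ne_zero]
    intro h0
    rw [hR, Matrix.det_mul, h0, mul_zero] at hPdet
    exact hPdet rfl
  set A := ∑ b : G, v b • B b with hA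
  set D := ∑ b : G, star (v b) • B b⁻¹ with hD
  have htrDA : (D * A).trace = 0 := by
    rw [hD, hA, Finset.sum_mul_sum]
    rw [Matrix.trace_sum]
    rw [Finset.sum_eq_zero]
    intro b _
    rw [Matrix.trace_sum]
    have : ∀ c : G, ((star (v b) • B b⁻¹) * (v c • B c)).trace
        = star (v b) * (v c * W.character (b⁻¹ * c)) := by
      intro c
      rw [smul_mul_smul_comm, Matrix.trace_smul, ← hBmul, htr, smul_eq_mul]
      ring
    rw [Finset.sum_congr rfl fun c _ => this c, ← Finset.mul_sum, hv b⁻¹, mul_zero]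
  have hBP : ∀ g : G, star (B g) * P = P * B g⁻¹ := by
    intro g
    have hconj : star (B g) * P * B g = P := by
      rw [hP, Finset.mul_sum, Finset.sum_mul]
      refine Fintype.sum_equiv (Equiv.mulRight g) _ _ fun h => ?_
      rw [Equiv.coe_mulRight, hBmul, star_mul]
      noncomm_ring
    calc star (B g) * P = star (B g) * P * (B g * B g⁻¹) := by
          rw [← hBmul, mul_inv_cancel, hB1, mul_one]
      _ = (star (B g) * P * B g) * B g⁻¹ := by noncomm_ring
      _ = P * B g⁻¹ := by rw [hconj]
  have hAP : star A * P = P * D := by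
    rw [hA, hD, star_sum, Finset.sum_mul, Finset.mul_sum]
    refine Finset.sum_congr rfl fun b _ => ?_
    rw [star_smul, Matrix.smul_mul, Matrix.mul_smul, hBP]
  have hRi : R * R⁻¹ = 1 := Matrix.mul_nonsing_inv R hRdet
  have hiR : R⁻¹ * R = 1 := Matrix.nonsing_inv_mul R hRdet
  have hsRR : star R * R = P := by
    rw [Matrix.star_eq_conjTranspose]; exact hR.symm
  set E := R * A * R⁻¹ with hE
  have htrE : (star E * E).trace = 0 := by
    have h1 : star E * E = star R⁻¹ * (star A * P) * A * R⁻¹ := by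
      rw [hE, star_mul, star_mul, ← hsRR]
      noncomm_ring
    rw [h1, hAP]
    have h2 : star R⁻¹ * (P * D) * A * R⁻¹ = star R⁻¹ * (P * D * A * R⁻¹) := by noncomm_ring
    rw [h2, Matrix.trace_mul_comm]
    have h3 : P * D * A * R⁻¹ * star R⁻¹ = P * (D * A) * (R⁻¹ * star R⁻¹) := by noncomm_ring
    rw [h3]
    have h4 : R⁻¹ * star R⁻¹ = P⁻¹ := by
      rw [Matrix.star_eq_conjTranspose, Matrix.conjTranspose_nonsing_inv, hR,
        ← Matrix.mul_inv_rev]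
    rw [h4, Matrix.trace_mul_comm]
    have h5 : P⁻¹ * (P * (D * A)) = (P⁻¹ * P) * (D * A) := by noncomm_ring
    have hPinv : P⁻¹ * P = 1 := Matrix.nonsing_inv_mul P (isUnit_iff_ne_zero.mpr hPdet)
    rw [h5, hPinv, one_mul, htrDA]
  have hE0 : E = 0 := trace_star_mul_self_eq_zero htrE
  have hA0 : A = 0 := by
    have : R⁻¹ * E * R = A := by
      rw [hE]
      calc R⁻¹ * (R * A * R⁻¹) * R = (R⁻¹ * R) * A * (R⁻¹ * R) := by noncomm_ring
        _ = A := by rw [hiR, one_mul, mul_one]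
    rw [← this, hE0, mul_zero, zero_mul]
  have := congrArg (fun M => (LinearMap.toMatrix bas bas).symm M) hA0
  simpa only [hA, hB, map_sum, map_smul, LinearEquiv.symm_apply_apply, map_zero] using this

/-! ### The group algebra and its simple submodules -/

abbrev GA (G : Type) [Group G] := MonoidAlgebra ℂ G

instance : FiniteDimensional ℂ (GA G) :=
  Module.Finite.equiv ((Finsupp.linearEquivFunOnFinite ℂ ℂ G).symm.trans (MonoidAlgebra.coeffLinearEquiv ℂ).symm)

lemma ma_decomp (y : GA G) : y = ∑ g : G, y.coeff g • MonoidAlgebra.of ℂ G g := by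
  have : ∀ g : G, y.coeff g • MonoidAlgebra.of ℂ G g = MonoidAlgebra.single g (y.coeff g) := by
    intro g
    rw [MonoidAlgebra.of_apply, MonoidAlgebra.smul_single', mul_one]
  rw [Finset.sum_congr rfl fun g _ => this g]
  conv_lhs => rw [← MonoidAlgebra.sum_coeff_single y]
  exact Finsupp.sum_fintype _ _ fun g => MonoidAlgebra.single_zero g

lemma smul_decomp {M : Type} [AddCommGroup M] [Module ℂ M] [Module (GA G) M]
    [IsScalarTower ℂ (GA G) M] (y : GA G) (v : M) :
    y • v = ∑ g : G, y.coeff g • ((MonoidAlgebra.of ℂ G g) • v) := by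
  conv_lhs => rw [ma_decomp y]
  rw [Finset.sum_smul]
  exact Finset.sum_congr rfl fun g _ => smul_assoc _ _ _

variable (S : Submodule (GA G) (GA G))

/-- The representation of `G` on a submodule of the group algebra. -/
def rhoS : Representation ℂ G S where
  toFun g :=
    { toFun := fun s => (MonoidAlgebra.of ℂ G g) • s
      map_add' := fun s t => smul_add (MonoidAlgebra.of ℂ G g) s t
      map_smul' := fun c s => smul_comm (MonoidAlgebra.of ℂ G g) c s }
  map_one' := by
    refine LinearMap.ext fun s => ?_
    show (MonoidAlgebra.of ℂ G (1 : G)) • s = s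
    rw [map_one, one_smul]
  map_mul' g h := by
    refine LinearMap.ext fun s => ?_
    show (MonoidAlgebra.of ℂ G (g * h)) • s
      = (MonoidAlgebra.of ℂ G g) • ((MonoidAlgebra.of ℂ G h) • s)
    rw [map_mul, mul_smul]

def VS : FDRep ℂ G := FDRep.of (rhoS S)

lemma exists_submodule_of_invariant (p : Submodule ℂ S)
    (hp : ∀ (g : G) (s : S), s ∈ p → (rhoS S) g s ∈ p) :
    ∃ q : Submodule (GA G) S, ∀ x : S, x ∈ q ↔ x ∈ p := by
  refine ⟨⟨⟨⟨(p : Set S), ?_⟩, ?_⟩, ?_⟩, fun x => Iff.rfl⟩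
  · exact fun ha hb => p.add_mem ha hb
  · exact p.zero_mem
  · intro a s hs
    show a • s ∈ p
    rw [smul_decomp a s]
    exact Submodule.sum_mem _ fun g _ => Submodule.smul_mem _ _ (hp g s hs)

lemma invariant_trivial (hS : IsSimpleModule (GA G) S) (p : Submodule ℂ S)
    (hp : ∀ (g : G) (s : S), s ∈ p → (rhoS S) g s ∈ p) : p = ⊥ ∨ p = ⊤ := by
  obtain ⟨q, hq⟩ := exists_submodule_of_invariant S p hp
  haveI := hS
  rcases eq_bot_or_eq_top q with h | h
  · left; ext x; rw [← hq, h]; rfl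
  · right; ext x; rw [← hq, h]; rfl

/-- The subrepresentation on an invariant subspace. -/
def subrep (X : FDRep ℂ G) (p : Submodule ℂ X) (hp : ∀ (g : G) x, x ∈ p → X.ρ g x ∈ p) :
    FDRep ℂ G :=
  FDRep.of
    { toFun := fun g => (X.ρ g).restrict (fun x hx => hp g x hx)
      map_one' := LinearMap.ext fun x => Subtype.ext <| by
        simp [LinearMap.restrict_apply]
      map_mul' := fun g h => LinearMap.ext fun x => Subtype.ext <| by
        simp [LinearMap.restrict_apply] }

def subrepIncl (X : FDRep ℂ G) (p : Submodule ℂ X) (hp : ∀ (g : G) x, x ∈ p → X.ρ g x ∈ p) :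
    subrep X p hp ⟶ X :=
  ⟨FGModuleCat.ofHom p.subtype, fun _ => FGModuleCat.hom_ext (LinearMap.ext fun _ => rfl)⟩

lemma ker_eq_bot_of_mono {X Y : FDRep ℂ G} (f : X ⟶ Y) [Mono f] :
    LinearMap.ker f.hom.hom.hom = ⊥ := by
  have hker : ∀ (g : G) x, x ∈ LinearMap.ker f.hom.hom.hom → X.ρ g x ∈ LinearMap.ker f.hom.hom.hom := by
    intro g x hx
    rw [LinearMap.mem_ker] at hx ⊢
    have h2 : f.hom.hom.hom (X.ρ g x) = Y.ρ g (f.hom.hom.hom x) := LinearMap.congr_fun (congrArg (fun φ => φ.hom.hom) (f.comm g)) x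
    exact h2.trans (by rw [hx, map_zero])
  set incl := subrepIncl X (LinearMap.ker f.hom.hom.hom) hker with hincl
  have hcomp : incl ≫ f = (0 : subrep X _ hker ⟶ Y) := by
    apply Action.hom_ext
    apply FGModuleCat.hom_ext
    refine LinearMap.ext fun x => ?_
    show f.hom.hom.hom ((LinearMap.ker f.hom.hom.hom).subtype x) = 0
    exact x.2
  have h0 : incl = 0 := by
    have : incl ≫ f = (0 : subrep X _ hker ⟶ X) ≫ f := by rw [hcomp, Limits.zero_comp]
    exact (cancel_mono f).mp this
  rw [eq_bot_iff]
  intro x hx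
  have h3 : (LinearMap.ker f.hom.hom.hom).subtype (⟨x, hx⟩ : LinearMap.ker f.hom.hom.hom) = 0 :=
    LinearMap.congr_fun (congrArg (fun φ => φ.hom.hom.hom) h0) ⟨x, hx⟩
  simpa using h3

lemma simple_VS (hS : IsSimpleModule (GA G) S) : Simple (VS S) := by
  haveI : Nontrivial S := IsSimpleModule.nontrivial (GA G) S
  constructor
  intro Y f hm
  constructor
  · intro hiso h0
    subst h0
    have hzero : (𝟙 (VS S) : VS S ⟶ VS S) = 0 := by
      rw [← IsIso.inv_hom_id (0 : Y ⟶ VS S), Limits.comp_zero]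
    have hid := congrArg (fun φ => φ.hom.hom.hom) hzero
    have hall : ∀ s : VS S, s = 0 := by
      intro s
      have := LinearMap.congr_fun hid s
      simpa using this
    obtain ⟨a, b, hab⟩ := exists_pair_ne S
    exact hab ((hall a).trans (hall b).symm)
  · intro hne
    have hhom : f.hom.hom.hom ≠ 0 := by
      intro h
      exact hne (Action.hom_ext _ _ (FGModuleCat.hom_ext h))
    have hinj : Function.Injective f.hom.hom.hom := by
      rw [← LinearMap.ker_eq_bot]
      exact ker_eq_bot_of_mono f
    have hsurj : Function.Surjective f.hom.hom.hom := by
      have hrange : ∀ (g : G) (s : VS S), s ∈ LinearMap.range f.hom.hom.hom →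
          (rhoS S) g s ∈ LinearMap.range f.hom.hom.hom := by
        rintro g s ⟨y, rfl⟩
        exact ⟨Y.ρ g y, (LinearMap.congr_fun (congrArg (fun φ => φ.hom.hom) (f.comm g)) y)⟩
      rcases invariant_trivial S hS (LinearMap.range f.hom.hom.hom) hrange with h | h
      · exfalso
        apply hhom
        refine LinearMap.ext fun y => ?_
        have : f.hom.hom.hom y ∈ LinearMap.range f.hom.hom.hom := ⟨y, rfl⟩
        erw [h] at this
        exact (Submodule.mem_bot ℂ).mp this
      · rw [← LinearMap.range_eq_top]; exact h
    set e := LinearEquiv.ofBijective f.hom.hom.hom ⟨hinj, hsurj⟩ with he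
    have hcomm : ∀ g : G, (e.symm.toLinearMap) ∘ₗ (rhoS S g) = Y.ρ g ∘ₗ e.symm.toLinearMap := by
      intro g
      refine LinearMap.ext fun s => ?_
      apply hinj
      show f.hom.hom.hom (e.symm ((rhoS S) g s)) = f.hom.hom.hom (Y.ρ g (e.symm s))
      have h1 : f.hom.hom.hom (Y.ρ g (e.symm s)) = (rhoS S) g (f.hom.hom.hom (e.symm s)) :=
        LinearMap.congr_fun (congrArg (fun φ => φ.hom.hom) (f.comm g)) (e.symm s)
      have h2 : ∀ t, f.hom.hom.hom (e.symm t) = t := fun t => e.apply_symm_apply t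
      rw [h1]; exact (h2 _).trans (congrArg _ (h2 s).symm)
    refine ⟨⟨⟨FGModuleCat.ofHom e.symm.toLinearMap, fun g => FGModuleCat.hom_ext (hcomm g)⟩, ?_, ?_⟩⟩
    · apply Action.hom_ext
      apply FGModuleCat.hom_ext
      refine LinearMap.ext fun y => ?_
      show e.symm (f.hom.hom.hom y) = y
      exact e.symm_apply_apply y
    · apply Action.hom_ext
      apply FGModuleCat.hom_ext
      refine LinearMap.ext fun s => ?_
      show f.hom.hom.hom (e.symm s) = s
      exact e.apply_symm_apply s

lemma asAlgebraHom_eq_sum (W : FDRep ℂ G) (y : GA G) :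
    Representation.asAlgebraHom W.ρ y = ∑ g : G, y.coeff g • W.ρ g := by
  conv_lhs => rw [ma_decomp y]
  rw [map_sum]
  exact Finset.sum_congr rfl fun g _ => by
    rw [map_smul, Representation.asAlgebraHom_of]

lemma smul_eq_zero_on_simple {W : FDRep ℂ G}
    (hocc : ∀ V : FDRep ℂ G, Simple V → ∃ f : V ⟶ W, f ≠ 0)
    (x : GA G) (hx : Representation.asAlgebraHom W.ρ x = 0)
    (hS : IsSimpleModule (GA G) S) (s : S) : x • s = 0 := by
  haveI := simple_VS S hS
  obtain ⟨f₀, hf₀⟩ := hocc (VS S) inferInstance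
  let F : S →ₗ[ℂ] W := f₀.hom.hom.hom
  have hhom : F ≠ 0 := fun h => hf₀ (Action.hom_ext _ _ (FGModuleCat.hom_ext h))
  have hker : ∀ (g : G) (t : S), t ∈ LinearMap.ker F →
      (rhoS S) g t ∈ LinearMap.ker F := by
    intro g t ht
    rw [LinearMap.mem_ker] at ht ⊢
    have h2 : F ((rhoS S) g t) = W.ρ g (F t) := LinearMap.congr_fun (congrArg (fun φ => φ.hom.hom) (f₀.comm g)) t
    have h3 : W.ρ g (F t) = W.ρ g 0 := congrArg _ ht
    exact h2.trans (h3.trans (map_zero _))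
  have hinj : Function.Injective F := by
    rw [← LinearMap.ker_eq_bot]
    rcases invariant_trivial S hS (LinearMap.ker F) hker with h | h
    · exact h
    · exfalso
      apply hhom
      refine LinearMap.ext fun t => ?_
      have : t ∈ LinearMap.ker F := h ▸ Submodule.mem_top
      simpa using this
  have hequi : F (x • s) = Representation.asAlgebraHom W.ρ x (F s) := by
    rw [smul_decomp x s, map_sum, asAlgebraHom_eq_sum, LinearMap.sum_apply]
    refine Finset.sum_congr rfl fun g _ => ?_
    rw [map_smul, LinearMap.smul_apply]
    congr 1
    exact LinearMap.congr_fun (congrArg (fun φ => φ.hom.hom) (f₀.comm g)) s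
  apply hinj
  rw [hequi, hx, map_zero]
  rfl

lemma eq_zero_of_kills_simples (x : GA G)
    (h : ∀ S : Submodule (GA G) (GA G), IsSimpleModule (GA G) S → ∀ s : S, x • (s : GA G) = 0) :
    x = 0 := by
  have h1 : (1 : GA G) ∈ sSup { m : Submodule (GA G) (GA G) | IsSimpleModule (GA G) m } := by
    rw [IsSemisimpleModule.sSup_simples_eq_top (GA G) (GA G)]
    trivial
  rw [sSup_eq_iSup'] at h1
  have hx1 : x * (1 : GA G) = 0 := by
    refine Submodule.iSup_induction _ (motive := fun m => x * m = 0) h1 ?_ (mul_zero x) ?_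
    · rintro ⟨S, hS⟩ m hm
      have := h S hS ⟨m, hm⟩
      simpa [smul_eq_mul] using this
    · intro a b ha hb
      rw [mul_add, ha, hb, add_zero]
  rwa [mul_one] at hx1

end Stmt6Aux

end

/-- The bilinear form `K_W(a,b) = χ_W(ab)` on `ℂG` is nondegenerate iff every
irreducible complex representation of `G` occurs in `W` with positive
multiplicity. -/
theorem stmt_6 {G : Type} [Group G] [Fintype G] [DecidableEq G]
    (W : FDRep ℂ G) :
    Matrix.det (Matrix.of fun a b : G => W.character (a * b)) ≠ 0 ↔
      ∀ V : FDRep ℂ G, Simple V → ∃ f : V ⟶ W, f ≠ 0 := by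
  classical
  constructor
  · intro hdet V hV
    by_contra h
    push_neg at h
    exact hdet (Stmt6Aux.det_eq_zero_of_no_hom V h)
  · intro hocc hdet
    obtain ⟨v, hv0, hvec⟩ := Matrix.exists_mulVec_eq_zero_iff.mpr hdet
    set x : Stmt6Aux.GA G := MonoidAlgebra.ofCoeff (Finsupp.equivFunOnFinite.symm v) with hxdef
    have hxg : ∀ g : G, x.coeff g = v g := fun g => rfl
    have hchar : ∀ a : G, ∑ b : G, v b * W.character (a * b) = 0 := by
      intro a
      have := congrFun hvec a
      simp only [Matrix.mulVec, dotProduct, Matrix.of_apply, Pi.zero_apply] at this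
      rw [← this]
      exact Finset.sum_congr rfl fun b _ => by ring
    have hx : Representation.asAlgebraHom W.ρ x = 0 := by
      rw [Stmt6Aux.asAlgebraHom_eq_sum]
      have := Stmt6Aux.rho_sum_zero W v hchar
      simpa only [hxg] using this
    have hx0 : x = 0 := by
      apply Stmt6Aux.eq_zero_of_kills_simples
      intro S hS s
      have := Stmt6Aux.smul_eq_zero_on_simple S hocc x hx hS s
      have h2 := congrArg (Submodule.subtype S) this
      simpa using h2
    apply hv0
    funext g
    rw [← hxg g, hx0]
    rfl
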